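/- Corollary 3 (convergence of DSI-HG under the weak MVI assumption). Suppose (w*, δ*) is a solution of the weak MVI with parameter ρ > 0, let θ = 1, and let σ, τ > 0 satisfy max{L12·(στ)^{1/2}, L11·σ} < min{1/3 − ρ(σ^{−1} + 4L11²σ), 1 − ρ(τ^{−1} + 12L12²τ)}. Let (w^k, δ^k) be a DSI-HG trajectory with parameters σ, τ, θ = 1, and for k ≥ 1 let γ_f^k ∈ ∂f(w^k) and γ_g^k ∈ ∂g(δ^k) be the subgradients appearing in its update equations. Then there is a constant C ≥ 0, independent of K, such that for every K ≥ 1: ∑_{k=1}^K ( ‖γ_f^k + ∇_w φ(w^k, δ^k)‖² + ‖γ_g^k − ∇_δ φ(w^k, δ^k)‖² ) ≤ C; in particular the average over the first K iterations of the squared saddle subdifferential norm at (w^k, δ^k) is at most C/K. -/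

import Mathlib

open scoped RealInnerProductSpace

private lemma young_two (c d a b : ℝ) (hd : 0 < d) (hcd : c * d = 1) :
    a * b ≤ c / 2 * a ^ 2 + d / 2 * b ^ 2 := by
  have h1 : c ^ 2 * d = c := by rw [pow_two, mul_assoc, hcd, mul_one]
  have h : 0 ≤ (c * a - b) ^ 2 * d / 2 := by positivity
  have e : (c * a - b) ^ 2 * d / 2 = c / 2 * a ^ 2 + d / 2 * b ^ 2 - a * b := by
    linear_combination (a ^ 2 / 2) * h1 - a * b * hcd
  linarith

/-- `γ` is a subgradient of `h` at `x`. -/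
def IsSubgradient {X : Type*} [NormedAddCommGroup X] [InnerProductSpace ℝ X]
    (h : X → ℝ) (x γ : X) : Prop :=
  ∀ u, h u ≥ h x + ⟪γ, u - x⟫

set_option maxHeartbeats 4000000 in
/-- Corollary 3: convergence of DSI-HG under the weak MVI assumption. -/
theorem dsihg_convergence_weak_mvi
    {E F : Type*}
    [NormedAddCommGroup E] [InnerProductSpace ℝ E] [FiniteDimensional ℝ E]
    [NormedAddCommGroup F] [InnerProductSpace ℝ F] [FiniteDimensional ℝ F]
    (φ : E → F → ℝ) (Gw : E → F → E) (Gd : E → F → F)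
    (hgw : ∀ (w : E) (δ : F), HasGradientAt (fun w' => φ w' δ) (Gw w δ) w)
    (hgd : ∀ (w : E) (δ : F), HasGradientAt (fun δ' => φ w δ') (Gd w δ) δ)
    (L11 L12 L22 : ℝ) (hL11 : 0 < L11) (hL12 : 0 < L12) (hL22 : 0 < L22)
    (hLww : ∀ (w w' : E) (δ : F), ‖Gw w δ - Gw w' δ‖ ≤ L11 * ‖w - w'‖)
    (hLdw : ∀ (w w' : E) (δ : F), ‖Gd w δ - Gd w' δ‖ ≤ L12 * ‖w - w'‖)
    (hLwd : ∀ (w : E) (δ δ' : F), ‖Gw w δ - Gw w δ'‖ ≤ L12 * ‖δ - δ'‖)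
    (hLdd : ∀ (w : E) (δ δ' : F), ‖Gd w δ - Gd w δ'‖ ≤ L22 * ‖δ - δ'‖)
    (f : E → ℝ) (g : F → ℝ)
    (hf : ConvexOn ℝ Set.univ f) (hg : ConvexOn ℝ Set.univ g)
    (wstar : E) (δstar : F) (ρ : ℝ) (hρ : 0 < ρ)
    (hMVI : ∀ (w : E) (δ : F) (γf : E) (γg : F),
      IsSubgradient f w γf → IsSubgradient g δ γg →
      ⟪γf + Gw w δ, w - wstar⟫ + ⟪γg - Gd w δ, δ - δstar⟫ ≥
        -(ρ / 2) * (‖γf + Gw w δ‖ ^ 2 + ‖γg - Gd w δ‖ ^ 2))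
    (σ τ θ : ℝ) (hσ : 0 < σ) (hτ : 0 < τ) (hθ : θ = 1)
    (hstep : max (L12 * Real.sqrt (σ * τ)) (L11 * σ) <
      min (1 / 3 - ρ * (σ⁻¹ + 4 * L11 ^ 2 * σ)) (1 - ρ * (τ⁻¹ + 12 * L12 ^ 2 * τ)))
    (w : ℕ → E) (d : ℕ → F) (γf : ℕ → E) (γg : ℕ → F)
    (hsubf : ∀ k : ℕ, IsSubgradient f (w (k + 1)) (γf (k + 1)))
    (hsubg : ∀ k : ℕ, IsSubgradient g (d (k + 1)) (γg (k + 1)))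
    (hupw : ∀ k : ℕ, (0 : E) = γf (k + 1) + σ⁻¹ • (w (k + 1) - w k) + Gw (w k) (d k)
      + θ • (Gw (w k) (d k) - Gw (w (k - 1)) (d (k - 1))))
    (hupd : ∀ k : ℕ, (0 : F) = γg (k + 1) + τ⁻¹ • (d (k + 1) - d k)
      - Gd (w (k + 1)) (d (k + 1))) :
    ∃ C : ℝ, 0 ≤ C ∧ ∀ K : ℕ, 1 ≤ K →
      ∑ k ∈ Finset.Icc 1 K,
        (‖γf k + Gw (w k) (d k)‖ ^ 2 + ‖γg k - Gd (w k) (d k)‖ ^ 2) ≤ C := by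
  -- basic facts about s = √(στ)
  set s : ℝ := Real.sqrt (σ * τ) with hs_def
  have hs0 : 0 < s := Real.sqrt_pos.mpr (by positivity)
  have hs2 : s ^ 2 = σ * τ := Real.sq_sqrt (by positivity)
  -- extract the step-size conditions
  rw [max_lt_iff] at hstep
  obtain ⟨hB, hA⟩ := hstep
  rw [lt_min_iff] at hB hA
  obtain ⟨hB1, hB2⟩ := hB
  obtain ⟨hA1, _hA2⟩ := hA
  have hL11σ : L11 * σ ≤ 1 / 2 := by
    have h0 : 0 ≤ ρ * (σ⁻¹ + 4 * L11 ^ 2 * σ) := by positivity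
    linarith
  have hL12s : L12 * s ≤ 1 / 2 := by
    have h0 : 0 ≤ ρ * (σ⁻¹ + 4 * L11 ^ 2 * σ) := by positivity
    linarith
  -- auxiliary sequences
  obtain ⟨u, hu⟩ : ∃ u : ℕ → E, ∀ k, u k = Gw (w k) (d k) - Gw (w (k - 1)) (d (k - 1)) :=
    ⟨_, fun _ => rfl⟩
  obtain ⟨pm, hpm⟩ : ∃ pm : ℕ → ℝ, ∀ k, pm k = ‖w k - w (k - 1)‖ := ⟨_, fun _ => rfl⟩
  obtain ⟨qm, hqm⟩ : ∃ qm : ℕ → ℝ, ∀ k, qm k = ‖d k - d (k - 1)‖ := ⟨_, fun _ => rfl⟩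
  obtain ⟨aa, haa⟩ : ∃ aa : ℕ → E, ∀ k, aa k = γf k + Gw (w k) (d k) := ⟨_, fun _ => rfl⟩
  obtain ⟨bb, hbb⟩ : ∃ bb : ℕ → F, ∀ k, bb k = γg k - Gd (w k) (d k) := ⟨_, fun _ => rfl⟩
  obtain ⟨V, hV⟩ : ∃ V : ℕ → ℝ, ∀ k, V k =
      σ⁻¹ / 2 * ‖w k - wstar‖ ^ 2 + τ⁻¹ / 2 * ‖d k - δstar‖ ^ 2 - ⟪u k, w k - wstar⟫
      + (L11 / 2 + 3 * ρ * L11 ^ 2) * pm k ^ 2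
      + (L12 / 2 * (σ * s⁻¹) + 3 * ρ * L12 ^ 2) * qm k ^ 2 := ⟨_, fun _ => rfl⟩
  have hpm1 : ∀ k : ℕ, pm (k + 1) = ‖w (k + 1) - w k‖ := fun k => by
    rw [hpm (k + 1), Nat.add_sub_cancel]
  have hqm1 : ∀ k : ℕ, qm (k + 1) = ‖d (k + 1) - d k‖ := fun k => by
    rw [hqm (k + 1), Nat.add_sub_cancel]
  have hpm0 : pm 0 = 0 := by rw [hpm 0]; simp
  have hqm0 : qm 0 = 0 := by rw [hqm 0]; simp
  have hu0 : u 0 = 0 := by rw [hu 0]; simp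
  have hpmnn : ∀ k, 0 ≤ pm k := fun k => by rw [hpm k]; exact norm_nonneg _
  have hqmnn : ∀ k, 0 ≤ qm k := fun k => by rw [hqm k]; exact norm_nonneg _
  -- update equations rewritten
  have haaeq : ∀ k : ℕ, aa (k + 1) = u (k + 1) - u k - σ⁻¹ • (w (k + 1) - w k) := by
    intro k
    have h := hupw k
    rw [hθ, one_smul] at h
    rw [haa (k + 1), hu (k + 1), hu k, Nat.add_sub_cancel, ← sub_eq_zero]
    have e : γf (k + 1) + Gw (w (k + 1)) (d (k + 1)) -
        (Gw (w (k + 1)) (d (k + 1)) - Gw (w k) (d k) -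
          (Gw (w k) (d k) - Gw (w (k - 1)) (d (k - 1))) - σ⁻¹ • (w (k + 1) - w k)) =
        γf (k + 1) + σ⁻¹ • (w (k + 1) - w k) + Gw (w k) (d k) +
          (Gw (w k) (d k) - Gw (w (k - 1)) (d (k - 1))) := by abel
    rw [e]
    exact h.symm
  have hbbeq : ∀ k : ℕ, bb (k + 1) = -(τ⁻¹ • (d (k + 1) - d k)) := by
    intro k
    have h := hupd k
    rw [hbb (k + 1), ← sub_eq_zero]
    have e : γg (k + 1) - Gd (w (k + 1)) (d (k + 1)) - -(τ⁻¹ • (d (k + 1) - d k)) =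
        γg (k + 1) + τ⁻¹ • (d (k + 1) - d k) - Gd (w (k + 1)) (d (k + 1)) := by abel
    rw [e]
    exact h.symm
  -- Lipschitz bound on u
  have hub : ∀ k : ℕ, ‖u k‖ ≤ L11 * pm k + L12 * qm k := by
    intro k
    rw [hu k, hpm k, hqm k]
    have e : Gw (w k) (d k) - Gw (w (k - 1)) (d (k - 1)) =
        (Gw (w k) (d k) - Gw (w (k - 1)) (d k)) +
          (Gw (w (k - 1)) (d k) - Gw (w (k - 1)) (d (k - 1))) := by abel
    rw [e]
    calc ‖_ + _‖ ≤ ‖Gw (w k) (d k) - Gw (w (k - 1)) (d k)‖ +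
          ‖Gw (w (k - 1)) (d k) - Gw (w (k - 1)) (d (k - 1))‖ := norm_add_le _ _
      _ ≤ L11 * ‖w k - w (k - 1)‖ + L12 * ‖d k - d (k - 1)‖ :=
          add_le_add (hLww _ _ _) (hLwd _ _ _)
  have hub2 : ∀ k : ℕ, ‖u k‖ ^ 2 ≤ 2 * L11 ^ 2 * pm k ^ 2 + 2 * L12 ^ 2 * qm k ^ 2 := by
    intro k
    have key := pow_le_pow_left₀ (norm_nonneg (u k)) (hub k) 2
    linarith only [key, sq_nonneg (L11 * pm k - L12 * qm k)]
  -- norm bound on aa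
  have hanorm : ∀ k : ℕ, ‖aa (k + 1)‖ ≤ σ⁻¹ * pm (k + 1) + ‖u (k + 1)‖ + ‖u k‖ := by
    intro k
    rw [haaeq k, hpm1 k]
    calc ‖u (k + 1) - u k - σ⁻¹ • (w (k + 1) - w k)‖
        ≤ ‖u (k + 1) - u k‖ + ‖σ⁻¹ • (w (k + 1) - w k)‖ := norm_sub_le _ _
      _ ≤ (‖u (k + 1)‖ + ‖u k‖) + σ⁻¹ * ‖w (k + 1) - w k‖ := by
          rw [norm_smul, Real.norm_eq_abs, abs_of_pos (inv_pos.mpr hσ)]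
          linarith [norm_sub_le (u (k + 1)) (u k)]
      _ = σ⁻¹ * ‖w (k + 1) - w k‖ + ‖u (k + 1)‖ + ‖u k‖ := by ring
  have ha2 : ∀ k : ℕ, ‖aa (k + 1)‖ ^ 2 ≤
      3 * σ⁻¹ ^ 2 * pm (k + 1) ^ 2 + 3 * ‖u (k + 1)‖ ^ 2 + 3 * ‖u k‖ ^ 2 := by
    intro k
    have key := pow_le_pow_left₀ (norm_nonneg (aa (k + 1))) (hanorm k) 2
    linarith only [key, sq_nonneg (σ⁻¹ * pm (k + 1) - ‖u (k + 1)‖),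
      sq_nonneg (σ⁻¹ * pm (k + 1) - ‖u k‖), sq_nonneg (‖u (k + 1)‖ - ‖u k‖)]
  have hb2 : ∀ k : ℕ, ‖bb (k + 1)‖ ^ 2 = τ⁻¹ ^ 2 * qm (k + 1) ^ 2 := by
    intro k
    rw [hbbeq k, hqm1 k, norm_neg, norm_smul, Real.norm_eq_abs,
      abs_of_pos (inv_pos.mpr hτ)]
    ring
  -- the one-step descent inequality
  have step : ∀ k : ℕ,
      V (k + 1)
        + (σ⁻¹ / 2 - L11 - L12 / 2 * (s * σ⁻¹) - 3 / 2 * ρ * σ⁻¹ ^ 2 - 6 * ρ * L11 ^ 2)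
            * pm (k + 1) ^ 2
        + (τ⁻¹ / 2 - L12 / 2 * (σ * s⁻¹) - 6 * ρ * L12 ^ 2 - ρ / 2 * τ⁻¹ ^ 2)
            * qm (k + 1) ^ 2 ≤ V k := by
    intro k
    -- weak MVI at iterate k+1
    have hmvi : ⟪aa (k + 1), w (k + 1) - wstar⟫ + ⟪bb (k + 1), d (k + 1) - δstar⟫ ≥
        -(ρ / 2) * (‖aa (k + 1)‖ ^ 2 + ‖bb (k + 1)‖ ^ 2) := by
      rw [haa (k + 1), hbb (k + 1)]
      exact hMVI _ _ _ _ (hsubf k) (hsubg k)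
    -- expand the aa inner product
    have F2a : ⟪aa (k + 1), w (k + 1) - wstar⟫ =
        ⟪u (k + 1), w (k + 1) - wstar⟫ - ⟪u k, w k - wstar⟫ - ⟪u k, w (k + 1) - w k⟫
          - σ⁻¹ * ⟪w (k + 1) - w k, w (k + 1) - wstar⟫ := by
      rw [haaeq k, inner_sub_left, inner_sub_left, real_inner_smul_left]
      have esplit : ⟪u k, w (k + 1) - wstar⟫ =
          ⟪u k, w k - wstar⟫ + ⟪u k, w (k + 1) - w k⟫ := by
        rw [← inner_add_right]
        congr 1
        abel
      rw [esplit]; ring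
    have F2b : ⟪w (k + 1) - w k, w (k + 1) - wstar⟫ =
        (‖w (k + 1) - wstar‖ ^ 2 - ‖w k - wstar‖ ^ 2 + pm (k + 1) ^ 2) / 2 := by
      have h1 := norm_sub_sq_real (w (k + 1) - wstar) (w k - wstar)
      have h2 : (w (k + 1) - wstar) - (w k - wstar) = w (k + 1) - w k := by abel
      rw [h2] at h1
      have h3 : ⟪w (k + 1) - w k, w (k + 1) - wstar⟫ =
          ‖w (k + 1) - wstar‖ ^ 2 - ⟪w (k + 1) - wstar, w k - wstar⟫ := by
        rw [← h2, inner_sub_left, real_inner_self_eq_norm_sq,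
          real_inner_comm (w k - wstar)]
      rw [hpm1 k]
      linarith
    have E1 : σ⁻¹ * ⟪w (k + 1) - w k, w (k + 1) - wstar⟫ =
        σ⁻¹ / 2 * ‖w (k + 1) - wstar‖ ^ 2 - σ⁻¹ / 2 * ‖w k - wstar‖ ^ 2
          + σ⁻¹ / 2 * pm (k + 1) ^ 2 := by rw [F2b]; ring
    -- expand the bb inner product
    have F3a : ⟪bb (k + 1), d (k + 1) - δstar⟫ =
        -(τ⁻¹ * ⟪d (k + 1) - d k, d (k + 1) - δstar⟫) := by
      rw [hbbeq k, inner_neg_left, real_inner_smul_left]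
    have F3b : ⟪d (k + 1) - d k, d (k + 1) - δstar⟫ =
        (‖d (k + 1) - δstar‖ ^ 2 - ‖d k - δstar‖ ^ 2 + qm (k + 1) ^ 2) / 2 := by
      have h1 := norm_sub_sq_real (d (k + 1) - δstar) (d k - δstar)
      have h2 : (d (k + 1) - δstar) - (d k - δstar) = d (k + 1) - d k := by abel
      rw [h2] at h1
      have h3 : ⟪d (k + 1) - d k, d (k + 1) - δstar⟫ =
          ‖d (k + 1) - δstar‖ ^ 2 - ⟪d (k + 1) - δstar, d k - δstar⟫ := by
        rw [← h2, inner_sub_left, real_inner_self_eq_norm_sq,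
          real_inner_comm (d k - δstar)]
      rw [hqm1 k]
      linarith
    have E2 : τ⁻¹ * ⟪d (k + 1) - d k, d (k + 1) - δstar⟫ =
        τ⁻¹ / 2 * ‖d (k + 1) - δstar‖ ^ 2 - τ⁻¹ / 2 * ‖d k - δstar‖ ^ 2
          + τ⁻¹ / 2 * qm (k + 1) ^ 2 := by rw [F3b]; ring
    -- Young bound for the cross term
    have H2 : -⟪u k, w (k + 1) - w k⟫ ≤
        L11 / 2 * pm k ^ 2 + L11 / 2 * pm (k + 1) ^ 2
          + L12 / 2 * (s * σ⁻¹) * pm (k + 1) ^ 2 + L12 / 2 * (σ * s⁻¹) * qm k ^ 2 := by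
      have c1 : -⟪u k, w (k + 1) - w k⟫ ≤ ‖u k‖ * ‖w (k + 1) - w k‖ := by
        have d1 := abs_real_inner_le_norm (u k) (w (k + 1) - w k)
        have d2 := neg_abs_le (⟪u k, w (k + 1) - w k⟫)
        linarith only [d1, d2]
      have c2 : ‖u k‖ * ‖w (k + 1) - w k‖ ≤ (L11 * pm k + L12 * qm k) * pm (k + 1) := by
        rw [hpm1 k]
        exact mul_le_mul_of_nonneg_right (hub k) (norm_nonneg _)
      have c3 : L11 * pm k * pm (k + 1) ≤ L11 / 2 * (pm k ^ 2 + pm (k + 1) ^ 2) := by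
        linarith only [mul_nonneg hL11.le (sq_nonneg (pm k - pm (k + 1)))]
      have c4 : L12 * (qm k * pm (k + 1)) ≤
          L12 * ((s * σ⁻¹) / 2 * pm (k + 1) ^ 2 + (σ * s⁻¹) / 2 * qm k ^ 2) := by
        have hy := young_two (s * σ⁻¹) (σ * s⁻¹) (pm (k + 1)) (qm k)
          (by positivity) (by field_simp)
        exact mul_le_mul_of_nonneg_left (by linarith [hy]) hL12.le
      linarith only [c1, c2, c3, c4]
    -- ρ-scaled residual bounds
    have H3 : ρ / 2 * ‖aa (k + 1)‖ ^ 2 ≤ ρ / 2 *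
        (3 * σ⁻¹ ^ 2 * pm (k + 1) ^ 2 + 6 * L11 ^ 2 * pm (k + 1) ^ 2
          + 6 * L12 ^ 2 * qm (k + 1) ^ 2 + 6 * L11 ^ 2 * pm k ^ 2
          + 6 * L12 ^ 2 * qm k ^ 2) := by
      have h := ha2 k
      have h1 := hub2 (k + 1)
      have h2 := hub2 k
      have : ‖aa (k + 1)‖ ^ 2 ≤ 3 * σ⁻¹ ^ 2 * pm (k + 1) ^ 2
          + 6 * L11 ^ 2 * pm (k + 1) ^ 2 + 6 * L12 ^ 2 * qm (k + 1) ^ 2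
          + 6 * L11 ^ 2 * pm k ^ 2 + 6 * L12 ^ 2 * qm k ^ 2 := by linarith
      exact mul_le_mul_of_nonneg_left this (by positivity)
    have H4 : ρ / 2 * ‖bb (k + 1)‖ ^ 2 = ρ / 2 * (τ⁻¹ ^ 2 * qm (k + 1) ^ 2) := by
      rw [hb2 k]
    rw [hV (k + 1), hV k]
    linarith only [hmvi, F2a, E1, F3a, E2, H2, H3, H4]
  -- positivity of the Lyapunov function
  have hL12si : L12 ≤ s⁻¹ / 2 := by
    have e : L12 * s * s⁻¹ = L12 := by field_simp
    calc L12 = L12 * s * s⁻¹ := e.symm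
      _ ≤ (1 / 2) * s⁻¹ := mul_le_mul_of_nonneg_right hL12s (inv_nonneg.mpr hs0.le)
      _ = s⁻¹ / 2 := by ring
  have hVpos : ∀ k, 0 ≤ V k := by
    intro k
    rw [hV k]
    have cs : ⟪u k, w k - wstar⟫ ≤ ‖u k‖ * ‖w k - wstar‖ := real_inner_le_norm _ _
    have prod : ‖u k‖ * ‖w k - wstar‖ ≤ (L11 * pm k + L12 * qm k) * ‖w k - wstar‖ :=
      mul_le_mul_of_nonneg_right (hub k) (norm_nonneg _)
    have yg := young_two σ⁻¹ σ (‖w k - wstar‖) (L11 * pm k + L12 * qm k) hσ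
      (inv_mul_cancel₀ hσ.ne')
    have sq1 : σ / 2 * (L11 * pm k + L12 * qm k) ^ 2 ≤
        σ * L11 ^ 2 * pm k ^ 2 + σ * L12 ^ 2 * qm k ^ 2 := by
      linarith only [mul_nonneg hσ.le (sq_nonneg (L11 * pm k - L12 * qm k))]
    have bA : σ * L11 ^ 2 * pm k ^ 2 ≤ L11 / 2 * pm k ^ 2 := by
      have h1 : σ * L11 ^ 2 ≤ L11 / 2 := by
        linarith only [mul_le_mul_of_nonneg_left hL11σ hL11.le]
      exact mul_le_mul_of_nonneg_right h1 (sq_nonneg _)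
    have bD : σ * L12 ^ 2 * qm k ^ 2 ≤ L12 / 2 * (σ * s⁻¹) * qm k ^ 2 := by
      have h1 : σ * L12 ^ 2 ≤ L12 / 2 * (σ * s⁻¹) := by
        have h2 := mul_le_mul_of_nonneg_left hL12si (mul_nonneg hσ.le hL12.le)
        linarith only [h2]
      exact mul_le_mul_of_nonneg_right h1 (sq_nonneg _)
    have t0 : 0 ≤ τ⁻¹ / 2 * ‖d k - δstar‖ ^ 2 := by positivity
    have r1 : 0 ≤ 3 * ρ * L11 ^ 2 * pm k ^ 2 := by positivity
    have r2 : 0 ≤ 3 * ρ * L12 ^ 2 * qm k ^ 2 := by positivity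
    linarith only [cs, prod, yg, sq1, bA, bD, t0, r1, r2]
  -- positivity of the step-size coefficients
  have hεw : 0 < σ⁻¹ / 2 - L11 - L12 / 2 * (s * σ⁻¹) - 3 / 2 * ρ * σ⁻¹ ^ 2
      - 6 * ρ * L11 ^ 2 := by
    have e1 : σ * (1 / 3 - ρ * (σ⁻¹ + 4 * L11 ^ 2 * σ)) =
        σ / 3 - ρ - 4 * ρ * L11 ^ 2 * σ ^ 2 := by field_simp; ring
    have h1 : L11 * σ ^ 2 < σ / 3 - ρ - 4 * ρ * L11 ^ 2 * σ ^ 2 := by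
      have h := mul_lt_mul_of_pos_left hA1 hσ
      rw [e1] at h; linarith only [h]
    have h2 : L12 * s * σ < σ / 3 - ρ - 4 * ρ * L11 ^ 2 * σ ^ 2 := by
      have h := mul_lt_mul_of_pos_left hB1 hσ
      rw [e1] at h; linarith only [h]
    have e2 : σ ^ 2 * (σ⁻¹ / 2 - L11 - L12 / 2 * (s * σ⁻¹) - 3 / 2 * ρ * σ⁻¹ ^ 2
        - 6 * ρ * L11 ^ 2) =
        σ / 2 - L11 * σ ^ 2 - 1 / 2 * (L12 * s * σ) - 3 / 2 * ρ
          - 6 * ρ * L11 ^ 2 * σ ^ 2 := by field_simp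
    have key : 0 < σ ^ 2 * (σ⁻¹ / 2 - L11 - L12 / 2 * (s * σ⁻¹) - 3 / 2 * ρ * σ⁻¹ ^ 2
        - 6 * ρ * L11 ^ 2) := by rw [e2]; linarith only [h1, h2]
    rcases mul_pos_iff.mp key with ⟨_, h⟩ | ⟨h, _⟩
    · exact h
    · exact absurd h (not_lt.mpr (sq_nonneg σ))
  have hεδ : 0 < τ⁻¹ / 2 - L12 / 2 * (σ * s⁻¹) - 6 * ρ * L12 ^ 2 - ρ / 2 * τ⁻¹ ^ 2 := by
    have e0 : σ * s⁻¹ = s * τ⁻¹ := by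
      field_simp
      linear_combination -hs2
    have e4 : τ * (1 - ρ * (τ⁻¹ + 12 * L12 ^ 2 * τ)) =
        τ - ρ - 12 * ρ * L12 ^ 2 * τ ^ 2 := by field_simp; ring
    have h3 : L12 * s * τ < τ - ρ - 12 * ρ * L12 ^ 2 * τ ^ 2 := by
      have h := mul_lt_mul_of_pos_left hB2 hτ
      rw [e4] at h; linarith only [h]
    have e3 : τ ^ 2 * (τ⁻¹ / 2 - L12 / 2 * (σ * s⁻¹) - 6 * ρ * L12 ^ 2
        - ρ / 2 * τ⁻¹ ^ 2) =
        τ / 2 - 1 / 2 * (L12 * s * τ) - 6 * ρ * L12 ^ 2 * τ ^ 2 - ρ / 2 := by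
      rw [e0]; field_simp
    have key : 0 < τ ^ 2 * (τ⁻¹ / 2 - L12 / 2 * (σ * s⁻¹) - 6 * ρ * L12 ^ 2
        - ρ / 2 * τ⁻¹ ^ 2) := by rw [e3]; linarith only [h3]
    rcases mul_pos_iff.mp key with ⟨_, h⟩ | ⟨h, _⟩
    · exact h
    · exact absurd h (not_lt.mpr (sq_nonneg τ))
  -- abbreviate the coefficients
  set EW : ℝ := σ⁻¹ / 2 - L11 - L12 / 2 * (s * σ⁻¹) - 3 / 2 * ρ * σ⁻¹ ^ 2
    - 6 * ρ * L11 ^ 2 with hEWdef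
  set ED : ℝ := τ⁻¹ / 2 - L12 / 2 * (σ * s⁻¹) - 6 * ρ * L12 ^ 2 - ρ / 2 * τ⁻¹ ^ 2
    with hEDdef
  set ε : ℝ := min EW ED with hεdef
  have hεpos : 0 < ε := lt_min hεw hεδ
  have hεW : ε ≤ EW := min_le_left _ _
  have hεD : ε ≤ ED := min_le_right _ _
  -- telescoping the descent inequality
  have hTel : ∀ K : ℕ, ε * ∑ k ∈ Finset.range (K + 1), (pm k ^ 2 + qm k ^ 2)
      ≤ V 0 - V K := by
    intro K
    induction K with
    | zero => rw [Finset.sum_range_one, hpm0, hqm0]; norm_num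
    | succ n ih =>
      rw [Finset.sum_range_succ, mul_add]
      have h1 := step n
      have a1 : ε * pm (n + 1) ^ 2 ≤ EW * pm (n + 1) ^ 2 :=
        mul_le_mul_of_nonneg_right hεW (sq_nonneg _)
      have a2 : ε * qm (n + 1) ^ 2 ≤ ED * qm (n + 1) ^ 2 :=
        mul_le_mul_of_nonneg_right hεD (sq_nonneg _)
      linarith only [ih, h1, a1, a2]
  -- bounding the residuals by the increments
  have hr : ∀ k : ℕ, ‖aa (k + 1)‖ ^ 2 + ‖bb (k + 1)‖ ^ 2 ≤
      (3 * σ⁻¹ ^ 2 + τ⁻¹ ^ 2 + 6 * L11 ^ 2 + 6 * L12 ^ 2) * (pm (k + 1) ^ 2 + qm (k + 1) ^ 2)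
      + (3 * σ⁻¹ ^ 2 + τ⁻¹ ^ 2 + 6 * L11 ^ 2 + 6 * L12 ^ 2) * (pm k ^ 2 + qm k ^ 2) := by
    intro k
    have h1 := ha2 k
    have h2 := hub2 (k + 1)
    have h3 := hub2 k
    have h4 := hb2 k
    linarith only [h1, h2, h3, h4, sq_nonneg (τ⁻¹ * pm (k + 1)), sq_nonneg (σ⁻¹ * qm (k + 1)),
      sq_nonneg (L11 * qm (k + 1)), sq_nonneg (L12 * pm (k + 1)), sq_nonneg (σ⁻¹ * pm k),
      sq_nonneg (τ⁻¹ * pm k), sq_nonneg (L12 * pm k), sq_nonneg (σ⁻¹ * qm k),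
      sq_nonneg (τ⁻¹ * qm k), sq_nonneg (L11 * qm k), sq_nonneg (τ⁻¹ * qm (k + 1))]
  set M : ℝ := 3 * σ⁻¹ ^ 2 + τ⁻¹ ^ 2 + 6 * L11 ^ 2 + 6 * L12 ^ 2 with hMdef
  have hM : 0 ≤ M := by rw [hMdef]; positivity
  -- summing the residual bounds
  have hG : ∀ K : ℕ, (∑ k ∈ Finset.Icc 1 K, (‖aa k‖ ^ 2 + ‖bb k‖ ^ 2))
      + M * (pm K ^ 2 + qm K ^ 2)
      ≤ 2 * M * ∑ k ∈ Finset.range (K + 1), (pm k ^ 2 + qm k ^ 2) := by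
    intro K
    induction K with
    | zero =>
      rw [show Finset.Icc 1 0 = ∅ from Finset.Icc_eq_empty (by norm_num), Finset.sum_empty,
        Finset.sum_range_one, hpm0, hqm0]
      norm_num
    | succ n ih =>
      rw [Finset.sum_Icc_succ_top (Nat.succ_le_succ (Nat.zero_le n)), Finset.sum_range_succ]
      have h := hr n
      linarith only [ih, h]
  -- conclusion
  refine ⟨2 * M * V 0 / ε, div_nonneg (mul_nonneg (mul_nonneg (by norm_num) hM)
    (hVpos 0)) hεpos.le, ?_⟩
  intro K _
  have t2 := hG K
  have t1 := hTel K
  have hSb : (∑ k ∈ Finset.range (K + 1), (pm k ^ 2 + qm k ^ 2)) ≤ V 0 / ε := by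
    rw [le_div_iff₀ hεpos]
    have h0 := hVpos K
    linarith only [t1, h0]
  have m0 : 0 ≤ M * (pm K ^ 2 + qm K ^ 2) := mul_nonneg hM (by positivity)
  have final : (∑ k ∈ Finset.Icc 1 K, (‖aa k‖ ^ 2 + ‖bb k‖ ^ 2)) ≤ 2 * M * V 0 / ε := by
    calc (∑ k ∈ Finset.Icc 1 K, (‖aa k‖ ^ 2 + ‖bb k‖ ^ 2))
        ≤ 2 * M * ∑ k ∈ Finset.range (K + 1), (pm k ^ 2 + qm k ^ 2) := by linarith only [t2, m0]
      _ ≤ 2 * M * (V 0 / ε) := mul_le_mul_of_nonneg_left hSb (by linarith [hM])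
      _ = 2 * M * V 0 / ε := by ring
  simpa only [haa, hbb] using final
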